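/- arXiv:1910.00028 — 6 statements merged into one kernel-verified Lean document; each statement's English description precedes it below -/
import Mathlib

section
/- Let r ≥ 2 and let n_1 ≤ n_2 ≤ ... ≤ n_r be positive integers. If H is a K_r-free subgraph of the complete r-partite graph K(n_1,...,n_r), then e(H) ≤ e(K(n_1,...,n_r)) - n_1·n_2. -/
open Finset

/-- r-partite Turán theorem: a `K_r`-free subgraph of the complete
`r`-partite graph `K(n_1,…,n_r)` with `n_1 ≤ … ≤ n_r` misses at least
`n_1 · n_2` edges. -/
theorem stmt0 (r : ℕ) (hr : 2 ≤ r) (n : Fin r → ℕ)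
    (hpos : ∀ i, 0 < n i) (hmono : Monotone n)
    (H : SimpleGraph (Σ i : Fin r, Fin (n i)))
    (hsub : H ≤ SimpleGraph.completeMultipartiteGraph (fun i : Fin r => Fin (n i)))
    (hfree : H.CliqueFree r) :
    H.edgeSet.ncard + n ⟨0, by omega⟩ * n ⟨1, by omega⟩ ≤
      (SimpleGraph.completeMultipartiteGraph (fun i : Fin r => Fin (n i))).edgeSet.ncard := by
  classical
  set K := SimpleGraph.completeMultipartiteGraph (fun i : Fin r => Fin (n i)) with hK
  have hEsub : H.edgeSet ⊆ K.edgeSet := SimpleGraph.edgeSet_mono hsub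
  have hsplit : (K.edgeSet \ H.edgeSet).ncard + H.edgeSet.ncard = K.edgeSet.ncard :=
    Set.ncard_diff_add_ncard_of_subset hEsub (Set.toFinite _)
  have key : n ⟨0, by omega⟩ * n ⟨1, by omega⟩ ≤ (K.edgeSet \ H.edgeSet).ncard := by
    set M : Finset (Sym2 (Σ i : Fin r, Fin (n i))) := (K.edgeSet \ H.edgeSet).toFinset with hM
    have hMcard : M.card = (K.edgeSet \ H.edgeSet).ncard := (Set.ncard_eq_toFinset_card' _).symm
    rw [← hMcard]
    -- the covering finsets
    set F : Sym2 (Σ i : Fin r, Fin (n i)) → Finset (∀ i : Fin r, Fin (n i)) :=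
      fun e => univ.filter (fun f => ∀ x ∈ e, f x.1 = x.2) with hF
    set P : ℕ := ∏ i, n i with hP
    have hPcard : (univ : Finset (∀ i : Fin r, Fin (n i))).card = P := by
      simp [hP, Fintype.card_pi]
    -- Claim A: every transversal lies in some F e, e ∈ M
    have claimA : (univ : Finset (∀ i : Fin r, Fin (n i))) ⊆ M.biUnion F := by
      intro f _
      rw [Finset.mem_biUnion]
      set S : Finset (Σ i : Fin r, Fin (n i)) :=
        univ.image (fun i : Fin r => (⟨i, f i⟩ : Σ i : Fin r, Fin (n i))) with hS
      have hinj : Function.Injective (fun i : Fin r => (⟨i, f i⟩ : Σ i : Fin r, Fin (n i))) := by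
        intro a b hab
        exact congrArg Sigma.fst hab
      have hcard : S.card = r := by
        rw [hS, Finset.card_image_of_injective _ hinj, Finset.card_univ, Fintype.card_fin]
      have hnc : ¬ H.IsNClique r S := hfree S
      have hncl : ¬ (S : Set (Σ i : Fin r, Fin (n i))).Pairwise H.Adj := by
        intro h
        exact hnc ⟨h, hcard⟩
      rw [Set.Pairwise] at hncl
      push_neg at hncl
      obtain ⟨x, hx, y, hy, hxy, hnadj⟩ := hncl
      simp only [hS, Finset.coe_image, Set.mem_image, Finset.coe_univ, Set.mem_univ,
        true_and] at hx hy
      obtain ⟨i, hi⟩ := hx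
      obtain ⟨j, hj⟩ := hy
      have hij : i ≠ j := by
        intro h
        apply hxy
        rw [← hi, ← hj, h]
      refine ⟨s(x, y), ?_, ?_⟩
      · rw [hM, Set.mem_toFinset]
        constructor
        · rw [SimpleGraph.mem_edgeSet]
          show x.1 ≠ y.1
          rw [← hi, ← hj]
          exact hij
        · rw [SimpleGraph.mem_edgeSet]
          exact hnadj
      · rw [hF, Finset.mem_filter]
        refine ⟨Finset.mem_univ _, ?_⟩
        intro z hz
        rw [Sym2.mem_iff] at hz
        rcases hz with h | h
        · rw [h, ← hi]
        · rw [h, ← hj]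
    -- Claim B: for each e ∈ M, n 0 * n 1 * (F e).card ≤ P
    have claimB : ∀ e ∈ M, n ⟨0, by omega⟩ * n ⟨1, by omega⟩ * (F e).card ≤ P := by
      intro e he
      have heK : e ∈ K.edgeSet := by
        rw [hM, Set.mem_toFinset] at he
        exact he.1
      induction e using Sym2.ind with
      | _ x y =>
        rw [SimpleGraph.mem_edgeSet] at heK
        have hij : x.1 ≠ y.1 := heK
        -- injection from (Fin (n x.1) × Fin (n y.1)) × F e into all transversals
        set φ : (Fin (n x.1) × Fin (n y.1)) × (∀ i : Fin r, Fin (n i)) →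
            (∀ i : Fin r, Fin (n i)) :=
          fun p => Function.update (Function.update p.2 x.1 p.1.1) y.1 p.1.2 with hφ
        have hmem : ∀ f ∈ F s(x, y), f x.1 = x.2 ∧ f y.1 = y.2 := by
          intro f hf
          rw [hF, Finset.mem_filter] at hf
          exact ⟨hf.2 x (Sym2.mem_mk_left _ _), hf.2 y (Sym2.mem_mk_right _ _)⟩
        have hinjOn : Set.InjOn φ (↑((univ : Finset (Fin (n x.1) × Fin (n y.1))) ×ˢ F s(x, y)) :
            Set ((Fin (n x.1) × Fin (n y.1)) × (∀ i : Fin r, Fin (n i)))) := by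
          intro p hp q hq hpq
          simp only [Finset.coe_product, Set.mem_prod, Finset.mem_coe, Finset.mem_product] at hp hq
          have hb : p.1.2 = q.1.2 := by
            have := congrFun hpq y.1
            simpa [hφ, Function.update_self] using this
          have ha : p.1.1 = q.1.1 := by
            have := congrFun hpq x.1
            simpa [hφ, Function.update_of_ne hij, Function.update_self] using this
          have hf : p.2 = q.2 := by
            funext k
            by_cases hkx : k = x.1
            · subst hkx
              rw [(hmem p.2 hp.2).1, (hmem q.2 hq.2).1]
            · by_cases hky : k = y.1
              · subst hky
                rw [(hmem p.2 hp.2).2, (hmem q.2 hq.2).2]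
              · have := congrFun hpq k
                simpa [hφ, Function.update_of_ne hkx, Function.update_of_ne hky] using this
          exact Prod.ext (Prod.ext ha hb) hf
        have hcardle : ((univ : Finset (Fin (n x.1) × Fin (n y.1))) ×ˢ F s(x, y)).card ≤
            (univ : Finset (∀ i : Fin r, Fin (n i))).card :=
          Finset.card_le_card_of_injOn φ (fun p _ => Finset.mem_univ _) hinjOn
        rw [Finset.card_product, Finset.card_univ, hPcard] at hcardle
        have hcu : Fintype.card (Fin (n x.1) × Fin (n y.1)) = n x.1 * n y.1 := by
          simp
        rw [hcu] at hcardle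
        -- n 0 * n 1 ≤ n x.1 * n y.1
        have hmin : n ⟨0, by omega⟩ * n ⟨1, by omega⟩ ≤ n x.1 * n y.1 := by
          rcases lt_or_gt_of_ne hij with h | h
          · have h1 : n ⟨0, by omega⟩ ≤ n x.1 := hmono (by exact Fin.mk_le_of_le_val (Nat.zero_le _))
            have h2 : n ⟨1, by omega⟩ ≤ n y.1 := by
              apply hmono
              have : (0 : ℕ) < (y.1 : ℕ) := lt_of_le_of_lt (Nat.zero_le _) h
              exact Fin.mk_le_of_le_val this
            exact Nat.mul_le_mul h1 h2
          · have h1 : n ⟨0, by omega⟩ ≤ n y.1 := hmono (by exact Fin.mk_le_of_le_val (Nat.zero_le _))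
            have h2 : n ⟨1, by omega⟩ ≤ n x.1 := by
              apply hmono
              have : (0 : ℕ) < (x.1 : ℕ) := lt_of_le_of_lt (Nat.zero_le _) h
              exact Fin.mk_le_of_le_val this
            calc n ⟨0, by omega⟩ * n ⟨1, by omega⟩
                ≤ n y.1 * n x.1 := Nat.mul_le_mul h1 h2
              _ = n x.1 * n y.1 := Nat.mul_comm _ _
        calc n ⟨0, by omega⟩ * n ⟨1, by omega⟩ * (F s(x, y)).card
            ≤ n x.1 * n y.1 * (F s(x, y)).card := Nat.mul_le_mul_right _ hmin
          _ ≤ P := hcardle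
    -- put it together
    have hT : P ≤ ∑ e ∈ M, (F e).card := by
      calc P = (univ : Finset (∀ i : Fin r, Fin (n i))).card := hPcard.symm
        _ ≤ (M.biUnion F).card := Finset.card_le_card claimA
        _ ≤ ∑ e ∈ M, (F e).card := Finset.card_biUnion_le
    have hfinal : n ⟨0, by omega⟩ * n ⟨1, by omega⟩ * P ≤ M.card * P := by
      calc n ⟨0, by omega⟩ * n ⟨1, by omega⟩ * P
          ≤ n ⟨0, by omega⟩ * n ⟨1, by omega⟩ * ∑ e ∈ M, (F e).card :=
            Nat.mul_le_mul_left _ hT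
        _ = ∑ e ∈ M, n ⟨0, by omega⟩ * n ⟨1, by omega⟩ * (F e).card := by
            rw [Finset.mul_sum]
        _ ≤ ∑ _e ∈ M, P := Finset.sum_le_sum claimB
        _ = M.card * P := by rw [Finset.sum_const, smul_eq_mul]
    have hPpos : 0 < P := by
      rw [hP]
      exact Finset.prod_pos (fun i _ => hpos i)
    exact Nat.le_of_mul_le_mul_right hfinal hPpos
  linarith [key, hsplit]
end

section
/- For every integer r ≥ 2 and every n ∈ ℕ, the Turán number ex(n, K_{r+1}) satisfies (n²/2)(1 - 1/r) - r/2 ≤ ex(n, K_{r+1}) ≤ (n²/2)(1 - 1/r). -/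
/-- The maximum number of edges of a `K_k`-free graph on `n` vertices. -/
noncomputable def exSup (n k : ℕ) : ℕ :=
  sSup {m | ∃ G : SimpleGraph (Fin n), G.CliqueFree k ∧ G.edgeSet.ncard = m}

open Finset SimpleGraph in
/-- The number of vertices `v < n` with `v % r = c`, for `c < r`. -/
lemma classCard (n r c : ℕ) (hr : 0 < r) (hc : c < r) :
    #(Finset.univ.filter fun v : Fin n => (v : ℕ) % r = c)
      = n / r + if c < n % r then 1 else 0 := by
  have h1 : #(Finset.univ.filter fun v : Fin n => (v : ℕ) % r = c)
      = #((Finset.range n).filter fun i => i % r = c) := by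
    refine Finset.card_bij (fun (v : Fin n) _ => (v : ℕ)) ?_ ?_ ?_
    · intro v hv; rw [mem_filter] at hv; simp only [mem_filter, mem_range]
      exact ⟨v.is_lt, hv.2⟩
    · intro a ha b hb h; exact Fin.val_injective h
    · intro b hb; simp only [mem_filter, mem_range] at hb
      exact ⟨⟨b, hb.1⟩, by simp [hb.2], rfl⟩
  rw [h1]
  have h2 : ((Finset.range n).filter fun i => i % r = c)
      = (Finset.range n).filter (· ≡ c [MOD r]) := by
    apply Finset.filter_congr; intro i _
    simp [Nat.ModEq, Nat.mod_eq_of_lt hc]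
  rw [h2, ← Nat.count_eq_card_filter_range, Nat.count_modEq_card _ hr, Nat.mod_eq_of_lt hc]

open Finset SimpleGraph in
/-- The exact edge count of the Turán graph. -/
lemma turanCount (n r : ℕ) (hr : 0 < r) :
    2 * #(turanGraph n r).edgeFinset
      + ((n % r) * (n / r + 1) ^ 2 + (r - n % r) * (n / r) ^ 2) = n ^ 2 := by
  classical
  set m : ℕ → ℕ := fun c => #(Finset.univ.filter fun v : Fin n => (v : ℕ) % r = c) with hm
  have hdeg : ∀ v : Fin n, (turanGraph n r).degree v + m ((v : ℕ) % r) = n := by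
    intro v
    have : (turanGraph n r).neighborFinset v
        = Finset.univ.filter fun w : Fin n => ¬ ((w : ℕ) % r = (v : ℕ) % r) := by
      ext w
      rw [mem_neighborFinset]; simp [turanGraph, ne_comm, eq_comm]
    have e1 : m ((v : ℕ) % r)
        = #(Finset.univ.filter fun w : Fin n => (w : ℕ) % r = (v : ℕ) % r) := rfl
    rw [degree, this, e1]
    rw [Finset.filter_not, Finset.card_sdiff_of_subset (Finset.filter_subset _ _)]
    have hcu : #(Finset.univ : Finset (Fin n)) = n := by simp
    have hle : #(Finset.univ.filter fun w : Fin n => (w : ℕ) % r = (v : ℕ) % r) ≤ n :=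
      (Finset.card_filter_le Finset.univ _).trans hcu.le
    omega
  have hsum := SimpleGraph.sum_degrees_eq_twice_card_edges (turanGraph n r)
  have hsum2 : (∑ v : Fin n, ((turanGraph n r).degree v + m ((v : ℕ) % r))) = n * n := by
    simp [Finset.sum_congr rfl (fun v _ => hdeg v), Finset.card_univ]
  rw [Finset.sum_add_distrib, hsum] at hsum2
  have hfib : (∑ v : Fin n, m ((v : ℕ) % r)) = ∑ c ∈ Finset.range r, m c * m c := by
    rw [← Finset.sum_fiberwise_of_maps_to (g := fun v : Fin n => (v : ℕ) % r)
      (t := Finset.range r) (fun v _ => Finset.mem_range.2 (Nat.mod_lt _ hr))]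
    refine Finset.sum_congr rfl fun c hc => ?_
    have : ∀ v ∈ Finset.univ.filter (fun v : Fin n => (v : ℕ) % r = c),
        m ((v : ℕ) % r) = m c := by
      intro v hv; rw [Finset.mem_filter] at hv; rw [hv.2]
    rw [Finset.sum_congr rfl this, Finset.sum_const, smul_eq_mul, hm]
  have hval : ∀ c ∈ Finset.range r, m c * m c
      = if c < n % r then (n / r + 1) ^ 2 else (n / r) ^ 2 := by
    intro c hc
    rw [hm]
    simp only
    rw [classCard n r c hr (Finset.mem_range.1 hc)]
    split_ifs <;> ring
  have hsplit : (∑ c ∈ Finset.range r, m c * m c)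
      = (n % r) * (n / r + 1) ^ 2 + (r - n % r) * (n / r) ^ 2 := by
    rw [Finset.sum_congr rfl hval, Finset.sum_ite, Finset.sum_const, Finset.sum_const]
    have h1 : (Finset.range r).filter (fun c => c < n % r) = Finset.range (n % r) := by
      ext c; simp only [Finset.mem_filter, Finset.mem_range]
      have := Nat.mod_lt n hr; omega
    have h2 : #((Finset.range r).filter (fun c => ¬ c < n % r)) = r - n % r := by
      have := Finset.card_filter_add_card_filter_not
        (s := Finset.range r) (p := fun c => c < n % r)
      rw [h1] at this; simp only [Finset.card_range] at this ⊢; omega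
    rw [h1, h2]; simp [Finset.card_range, mul_comm]
  rw [hfib, hsplit] at hsum2
  nlinarith [hsum2]

open Finset SimpleGraph in
/-- Turán's theorem (quantitative form): for `r ≥ 2`,
`(n²/2)(1 - 1/r) - r/2 ≤ ex(n, K_{r+1}) ≤ (n²/2)(1 - 1/r)`. -/
theorem stmt1 (r n : ℕ) (hr : 2 ≤ r) :
    (n : ℝ) ^ 2 / 2 * (1 - 1 / r) - r / 2 ≤ (exSup n (r + 1) : ℝ) ∧
      (exSup n (r + 1) : ℝ) ≤ (n : ℝ) ^ 2 / 2 * (1 - 1 / r) := by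
  classical
  have hr0 : 0 < r := by omega
  have hex : exSup n (r + 1) = #(turanGraph n r).edgeFinset := by
    have hub : ∀ x ∈ {m | ∃ G : SimpleGraph (Fin n), G.CliqueFree (r + 1)
        ∧ G.edgeSet.ncard = m}, x ≤ #(turanGraph n r).edgeFinset := by
      rintro x ⟨G, hG, rfl⟩
      have : DecidableRel G.Adj := Classical.decRel _
      have h1 : G.edgeSet.ncard = #G.edgeFinset := by
        rw [← SimpleGraph.coe_edgeFinset, Set.ncard_coe_finset]
      rw [h1]
      exact (isTuranMaximal_turanGraph (n := n) hr0).2 hG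
    have hmem : #(turanGraph n r).edgeFinset ∈ {m | ∃ G : SimpleGraph (Fin n),
        G.CliqueFree (r + 1) ∧ G.edgeSet.ncard = m} :=
      ⟨turanGraph n r, turanGraph_cliqueFree hr0,
        by rw [← SimpleGraph.coe_edgeFinset, Set.ncard_coe_finset]⟩
    refine le_antisymm (csSup_le ⟨_, hmem⟩ hub) (le_csSup ⟨_, hub⟩ hmem)
  rw [hex]
  have key := turanCount n r hr0
  have hsr : n % r < r := Nat.mod_lt _ hr0
  have hnd : r * (n / r) + n % r = n := Nat.div_add_mod n r
  set E := #(turanGraph n r).edgeFinset with hE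
  set a := n / r
  set s := n % r
  have keyR : 2 * (E : ℝ) + ((s : ℝ) * ((a : ℝ) + 1) ^ 2
      + ((r : ℝ) - s) * (a : ℝ) ^ 2) = (n : ℝ) ^ 2 := by
    have h := congrArg (fun x : ℕ => (x : ℝ)) key
    push_cast [Nat.cast_sub hsr.le] at h
    linarith [h]
  have hnR : (r : ℝ) * a + s = n := by exact_mod_cast hnd
  have hrR : (2 : ℝ) ≤ r := by exact_mod_cast hr
  have hsR : (s : ℝ) < r := by exact_mod_cast hsr
  have ha0 : (0 : ℝ) ≤ a := Nat.cast_nonneg _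
  have hs0 : (0 : ℝ) ≤ s := Nat.cast_nonneg _
  have hrpos : (0 : ℝ) < r := by linarith
  have hinv : (1 : ℝ) / r * r = 1 := by field_simp
  constructor
  · nlinarith [mul_nonneg hs0 (sub_nonneg.2 hsR.le), sq_nonneg ((r:ℝ) - s),
      mul_nonneg (mul_nonneg hs0 ha0) ha0, sq_nonneg ((a:ℝ)), hinv,
      mul_le_mul_of_nonneg_left hsR.le (le_of_lt hrpos)]
  · nlinarith [mul_nonneg hs0 (sub_nonneg.2 hsR.le), hinv,
      mul_nonneg (mul_nonneg hs0 ha0) ha0]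
end

section
/- Let t, r, n be positive integers with r ≥ 2 and let G be an n-vertex K_{r+1}-free graph with e(G) ≥ ex(n, K_{r+1}) - t. Then there exists a partition of V(G) into r parts V_1, ..., V_r such that: (1) the total number of edges inside the parts is at most t; (2) the maximum degree of G equals |V_2| + |V_3| + ... + |V_r|; and (3) the total number of non-edges between distinct parts (i.e., Σ_{i<j} (|V_i||V_j| - e(V_i, V_j))) is at most 2t. -/
/-- Number of edges of `G` with both endpoints in `A`. -/
noncomputable def eIn {α : Type*} (G : SimpleGraph α) (A : Set α) : ℕ :=
  {e ∈ G.edgeSet | ∀ v ∈ e, v ∈ A}.ncard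

/-- Number of edges of `G` with one endpoint in `A` and the other in `B`
(for disjoint `A`, `B`). -/
noncomputable def eBtw {α : Type*} (G : SimpleGraph α) (A B : Set α) : ℕ :=
  {e ∈ G.edgeSet | ∃ u ∈ A, ∃ v ∈ B, e = s(u, v)}.ncard

open Finset

section FurediAux

variable {n : ℕ}

/-- count of adjacent ordered pairs in `A × B`. -/
def pcount (G : SimpleGraph (Fin n)) [DecidableRel G.Adj] (A B : Finset (Fin n)) : ℕ :=
  ((A ×ˢ B).filter fun q => G.Adj q.1 q.2).card

lemma pcount_eq_sum (G : SimpleGraph (Fin n)) [DecidableRel G.Adj] (A B : Finset (Fin n)) :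
    pcount G A B = ∑ u ∈ A, (B.filter fun v => G.Adj u v).card := by
  unfold pcount
  rw [Finset.card_eq_sum_ones, Finset.sum_filter, Finset.sum_product]
  refine Finset.sum_congr rfl fun u _ => ?_
  rw [Finset.card_eq_sum_ones, Finset.sum_filter]

lemma pcount_comm (G : SimpleGraph (Fin n)) [DecidableRel G.Adj] (A B : Finset (Fin n)) :
    pcount G A B = pcount G B A := by
  unfold pcount
  refine Finset.card_bij' (fun q _ => (q.2, q.1)) (fun q _ => (q.2, q.1)) ?_ ?_ ?_ ?_
  · rintro ⟨u, v⟩ h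
    simp only [Finset.mem_filter, Finset.mem_product] at h ⊢
    exact ⟨⟨h.1.2, h.1.1⟩, h.2.symm⟩
  · rintro ⟨u, v⟩ h
    simp only [Finset.mem_filter, Finset.mem_product] at h ⊢
    exact ⟨⟨h.1.2, h.1.1⟩, h.2.symm⟩
  · rintro ⟨u, v⟩ _; rfl
  · rintro ⟨u, v⟩ _; rfl

lemma pcount_union_right (G : SimpleGraph (Fin n)) [DecidableRel G.Adj]
    (A B C : Finset (Fin n)) (h : Disjoint B C) :
    pcount G A (B ∪ C) = pcount G A B + pcount G A C := by
  simp only [pcount_eq_sum]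
  rw [← Finset.sum_add_distrib]
  refine Finset.sum_congr rfl fun u _ => ?_
  rw [Finset.filter_union, Finset.card_union_of_disjoint
    (Finset.disjoint_filter_filter h)]

lemma pcount_empty_right (G : SimpleGraph (Fin n)) [DecidableRel G.Adj] (A : Finset (Fin n)) :
    pcount G A ∅ = 0 := by
  simp [pcount_eq_sum]

lemma pcount_le (G : SimpleGraph (Fin n)) [DecidableRel G.Adj] (A B : Finset (Fin n)) :
    pcount G A B ≤ A.card * B.card := by
  calc pcount G A B ≤ (A ×ˢ B).card := Finset.card_filter_le _ _
  _ = A.card * B.card := Finset.card_product _ _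

lemma pcount_univ_univ (G : SimpleGraph (Fin n)) [DecidableRel G.Adj] :
    pcount G univ univ = ∑ v, G.degree v := by
  rw [pcount_eq_sum]
  refine Finset.sum_congr rfl fun u _ => ?_
  have : Finset.univ.filter (fun v => G.Adj u v) = G.neighborFinset u := by
    ext w; simp [SimpleGraph.mem_neighborFinset]
  rw [this]
  rfl

/-- decompose `pcount` along a descending chain. -/
lemma pcount_chain (G : SimpleGraph (Fin n)) [DecidableRel G.Adj]
    (D : ℕ → Finset (Fin n)) (hsub : ∀ k, D (k + 1) ⊆ D k)
    (A : Finset (Fin n)) :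
    ∀ (m j : ℕ), D (j + m) = ∅ →
      pcount G A (D j) = ∑ k ∈ Ico j (j + m), pcount G A (D k \ D (k + 1)) := by
  intro m
  induction m with
  | zero =>
    intro j hD
    have h0 : D j = ∅ := by simpa using hD
    simp [h0, pcount_empty_right]
  | succ m ih =>
    intro j hD
    rw [show j + (m + 1) = (j + 1) + m from by omega] at hD ⊢
    rw [Finset.sum_eq_sum_Ico_succ_bot (show j < j + 1 + m by omega), ← ih (j + 1) hD,
        ← pcount_union_right _ _ _ _ (Finset.sdiff_disjoint),
        Finset.sdiff_union_of_subset (hsub j)]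

lemma card_chain (D : ℕ → Finset (Fin n)) (hsub : ∀ k, D (k + 1) ⊆ D k) :
    ∀ (m j : ℕ), D (j + m) = ∅ →
      (D j).card = ∑ k ∈ Ico j (j + m), (D k \ D (k + 1)).card := by
  intro m
  induction m with
  | zero =>
    intro j hD
    have h0 : D j = ∅ := by simpa using hD
    simp [h0]
  | succ m ih =>
    intro j hD
    rw [show j + (m + 1) = (j + 1) + m from by omega] at hD ⊢
    rw [Finset.sum_eq_sum_Ico_succ_bot (show j < j + 1 + m by omega), ← ih (j + 1) hD,
        Finset.card_sdiff_add_card_eq_card (hsub j)]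

lemma range_filter_lt (r k : ℕ) : (range r).filter (fun j => k < j) = Ico (k + 1) r := by
  ext j; simp only [Finset.mem_filter, Finset.mem_range, Finset.mem_Ico]; omega

lemma square_split (r : ℕ) (f : ℕ → ℕ → ℕ) (hsym : ∀ k j, f k j = f j k) :
    ∑ k ∈ range r, ∑ j ∈ range r, f k j
      = (∑ k ∈ range r, f k k) + 2 * ∑ k ∈ range r, ∑ j ∈ Ico (k + 1) r, f k j := by
  have hpt : ∀ k j : ℕ, f k j = (if j < k then f k j else 0) + ((if j = k then f k j else 0)
      + (if k < j then f k j else 0)) := by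
    intro k j
    rcases lt_trichotomy j k with h | h | h
    · simp [h, Nat.ne_of_lt h, Nat.lt_asymm h]
    · simp [h, lt_irrefl]
    · simp [Nat.ne_of_gt h, Nat.lt_asymm h, h]
  have hsplit : ∑ k ∈ range r, ∑ j ∈ range r, f k j
      = (∑ k ∈ range r, ∑ j ∈ range r, if j < k then f k j else 0)
        + ((∑ k ∈ range r, ∑ j ∈ range r, if j = k then f k j else 0)
        + ∑ k ∈ range r, ∑ j ∈ range r, if k < j then f k j else 0) := by
    rw [← Finset.sum_add_distrib, ← Finset.sum_add_distrib]
    refine Finset.sum_congr rfl fun k _ => ?_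
    rw [← Finset.sum_add_distrib, ← Finset.sum_add_distrib]
    exact Finset.sum_congr rfl fun j _ => hpt k j
  have hdiag : (∑ k ∈ range r, ∑ j ∈ range r, if j = k then f k j else 0)
      = ∑ k ∈ range r, f k k := by
    refine Finset.sum_congr rfl fun k hk => ?_
    rw [Finset.sum_ite_eq' (range r) k (fun j => f k j)]
    exact if_pos hk
  have hupper : (∑ k ∈ range r, ∑ j ∈ range r, if k < j then f k j else 0)
      = ∑ k ∈ range r, ∑ j ∈ Ico (k + 1) r, f k j := by
    refine Finset.sum_congr rfl fun k _ => ?_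
    rw [← Finset.sum_filter, range_filter_lt]
  have hlower : (∑ k ∈ range r, ∑ j ∈ range r, if j < k then f k j else 0)
      = ∑ k ∈ range r, ∑ j ∈ Ico (k + 1) r, f k j := by
    rw [Finset.sum_comm]
    refine Finset.sum_congr rfl fun j _ => ?_
    rw [← Finset.sum_filter, range_filter_lt]
    exact Finset.sum_congr rfl fun k _ => hsym k j
  rw [hsplit, hdiag, hupper, hlower]
  ring

lemma eBtw_eq_pcount (G : SimpleGraph (Fin n)) [DecidableRel G.Adj] (A B : Finset (Fin n))
    (hAB : Disjoint A B) :
    eBtw G (A : Set (Fin n)) (B : Set (Fin n)) = pcount G A B := by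
  classical
  have hset : {e ∈ G.edgeSet | ∃ u ∈ (A : Set (Fin n)), ∃ v ∈ (B : Set (Fin n)), e = s(u, v)}
      = ((((A ×ˢ B).filter fun q => G.Adj q.1 q.2).image fun q => s(q.1, q.2) :
          Finset (Sym2 (Fin n))) : Set (Sym2 (Fin n))) := by
    ext e
    simp only [Set.mem_setOf_eq, Finset.coe_image, Set.mem_image, Finset.mem_coe,
      Finset.mem_filter, Finset.mem_product]
    constructor
    · rintro ⟨he, u, hu, v, hv, rfl⟩
      exact ⟨(u, v), ⟨⟨hu, hv⟩, he⟩, rfl⟩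
    · rintro ⟨⟨u, v⟩, ⟨⟨hu, hv⟩, hadj⟩, rfl⟩
      exact ⟨hadj, u, hu, v, hv, rfl⟩
  rw [eBtw, hset, Set.ncard_coe_finset, pcount]
  apply Finset.card_image_of_injOn
  rintro ⟨u, v⟩ h1 ⟨u', v'⟩ h2 he
  simp only [Finset.coe_filter, Set.mem_setOf_eq, Finset.mem_product] at h1 h2
  rw [Sym2.eq_iff] at he
  rcases he with ⟨rfl, rfl⟩ | ⟨rfl, rfl⟩
  · rfl
  · exact absurd h2.1.2 (Finset.disjoint_left.1 hAB h1.1.1)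

lemma eIn_two_mul (G : SimpleGraph (Fin n)) [DecidableRel G.Adj] (A : Finset (Fin n)) :
    2 * eIn G (A : Set (Fin n)) = pcount G A A := by
  classical
  set s : Finset (Fin n × Fin n) := (A ×ˢ A).filter fun q => G.Adj q.1 q.2 with hs
  have hset : {e ∈ G.edgeSet | ∀ v ∈ e, v ∈ (A : Set (Fin n))}
      = ((s.image fun q => s(q.1, q.2) : Finset (Sym2 (Fin n))) : Set (Sym2 (Fin n))) := by
    ext e
    induction e using Sym2.ind with
    | _ u v =>
      simp only [Set.mem_setOf_eq, Finset.coe_image, Set.mem_image, Finset.mem_coe, hs,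
        Finset.mem_filter, Finset.mem_product, SimpleGraph.mem_edgeSet, Sym2.mem_iff]
      constructor
      · rintro ⟨hadj, hmem⟩
        exact ⟨(u, v), ⟨⟨hmem u (Or.inl rfl), hmem v (Or.inr rfl)⟩, hadj⟩, rfl⟩
      · rintro ⟨⟨a, b⟩, ⟨⟨ha, hb⟩, hadj⟩, he⟩
        rw [Sym2.eq_iff] at he
        rcases he with ⟨rfl, rfl⟩ | ⟨rfl, rfl⟩
        · exact ⟨hadj, fun w hw => by rcases hw with rfl | rfl <;> assumption⟩
        · exact ⟨hadj.symm, fun w hw => by rcases hw with rfl | rfl <;> assumption⟩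
  have hfiber : ∀ b ∈ s.image (fun q => s(q.1, q.2)),
      (s.filter fun q => s(q.1, q.2) = b).card = 2 := by
    intro b hb
    obtain ⟨⟨u, v⟩, hq, rfl⟩ := Finset.mem_image.1 hb
    simp only [hs, Finset.mem_filter, Finset.mem_product] at hq
    have hne : u ≠ v := hq.2.ne
    have hfe : s.filter (fun q => s(q.1, q.2) = s(u, v)) = {(u, v), (v, u)} := by
      ext ⟨a, b⟩
      simp only [Finset.mem_filter, hs, Finset.mem_product, Finset.mem_insert,
        Finset.mem_singleton, Sym2.eq_iff, Prod.mk.injEq]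
      constructor
      · rintro ⟨-, ⟨rfl, rfl⟩ | ⟨rfl, rfl⟩⟩
        · exact Or.inl ⟨rfl, rfl⟩
        · exact Or.inr ⟨rfl, rfl⟩
      · rintro (⟨rfl, rfl⟩ | ⟨rfl, rfl⟩)
        · exact ⟨⟨⟨hq.1.1, hq.1.2⟩, hq.2⟩, Or.inl ⟨rfl, rfl⟩⟩
        · exact ⟨⟨⟨hq.1.2, hq.1.1⟩, hq.2.symm⟩, Or.inr ⟨rfl, rfl⟩⟩
    rw [hfe, Finset.card_insert_of_notMem (by
      simp only [Finset.mem_singleton, Prod.mk.injEq]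
      exact fun h => hne h.1), Finset.card_singleton]
  have hcard : s.card = 2 * (s.image fun q => s(q.1, q.2)).card := by
    rw [Finset.card_eq_sum_card_image (fun q : Fin n × Fin n => s(q.1, q.2)) s,
      Finset.sum_congr rfl hfiber, Finset.sum_const, smul_eq_mul, mul_comm]
  rw [eIn, hset, Set.ncard_coe_finset, pcount, ← hs, hcard]

/-- a vertex of `A` maximizing the degree within `A`. -/
noncomputable def stepv [Nonempty (Fin n)] (G : SimpleGraph (Fin n)) [DecidableRel G.Adj]
    (A : Finset (Fin n)) : Fin n :=
  if h : A.Nonempty then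
    (A.exists_max_image (fun v => (A ∩ G.neighborFinset v).card) h).choose
  else Classical.arbitrary _

lemma stepv_spec [Nonempty (Fin n)] (G : SimpleGraph (Fin n)) [DecidableRel G.Adj]
    {A : Finset (Fin n)} (h : A.Nonempty) :
    stepv G A ∈ A ∧ ∀ v ∈ A,
      (A ∩ G.neighborFinset v).card ≤ (A ∩ G.neighborFinset (stepv G A)).card := by
  rw [stepv, dif_pos h]
  obtain ⟨h1, h2⟩ := (A.exists_max_image (fun v => (A ∩ G.neighborFinset v).card) h).choose_spec
  exact ⟨h1, h2⟩

/-- the greedy chain of neighborhoods. -/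
noncomputable def chainD [Nonempty (Fin n)] (G : SimpleGraph (Fin n)) [DecidableRel G.Adj] :
    ℕ → Finset (Fin n)
  | 0 => univ
  | k + 1 => chainD G k ∩ G.neighborFinset (stepv G (chainD G k))

variable [Nonempty (Fin n)] (G : SimpleGraph (Fin n)) [DecidableRel G.Adj]

lemma chainD_succ_subset (k : ℕ) : chainD G (k + 1) ⊆ chainD G k :=
  Finset.inter_subset_left

lemma chainD_anti {j k : ℕ} (h : j ≤ k) : chainD G k ⊆ chainD G j := by
  induction k with
  | zero => simp_all
  | succ k ih =>
    rcases Nat.lt_or_ge j (k + 1) with h' | h'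
    · exact (chainD_succ_subset G k).trans (ih (by omega))
    · have : j = k + 1 := by omega
      subst this; exact Finset.Subset.refl _

lemma chainD_adj {k : ℕ} {w : Fin n} (hw : w ∈ chainD G (k + 1)) :
    G.Adj (stepv G (chainD G k)) w :=
  (G.mem_neighborFinset _ _).1 (Finset.mem_inter.1 hw).2

lemma chainD_card_bound {k : ℕ} {v : Fin n} (hv : v ∈ chainD G k) :
    (chainD G k ∩ G.neighborFinset v).card ≤ (chainD G (k + 1)).card := by
  have h := (stepv_spec G ⟨v, hv⟩).2 v hv
  exact h

lemma chainD_empty (r : ℕ) (hfree : G.CliqueFree (r + 1)) : chainD G r = ∅ := by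
  by_contra hne
  obtain ⟨v, hv⟩ := Finset.nonempty_iff_ne_empty.2 hne
  set xs : ℕ → Fin n := fun j => stepv G (chainD G j) with hxs
  have hadjm : ∀ j < r, ∀ w ∈ chainD G (j + 1), G.Adj (xs j) w := by
    intro j _ w hw
    exact chainD_adj G hw
  have hadjv : ∀ j < r, G.Adj (xs j) v := fun j hj =>
    hadjm j hj v (chainD_anti G (by omega : j + 1 ≤ r) hv)
  have hadjx : ∀ j k, j < k → k < r → G.Adj (xs j) (xs k) := by
    intro j k hjk hk
    have hxk : xs k ∈ chainD G k := (stepv_spec G ⟨v, chainD_anti G (le_of_lt hk) hv⟩).1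
    exact hadjm j (by omega) (xs k) (chainD_anti G (by omega : j + 1 ≤ k) hxk)
  apply hfree (insert v ((range r).image xs))
  constructor
  · rintro a ha b hb hab
    simp only [Finset.coe_insert, Set.mem_insert_iff, Finset.coe_image, Set.mem_image,
      Finset.mem_coe, Finset.mem_range] at ha hb
    rcases ha with rfl | ⟨i, hi, rfl⟩ <;> rcases hb with rfl | ⟨j, hj, rfl⟩
    · exact absurd rfl hab
    · exact (hadjv j hj).symm
    · exact hadjv i hi
    · rcases lt_trichotomy i j with h | h | h
      · exact hadjx i j h hj
      · exact absurd (by rw [h]) hab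
      · exact (hadjx j i h hi).symm
  · rw [Finset.card_insert_of_notMem, Finset.card_image_of_injOn, Finset.card_range]
    · intro i hi j hj hij
      simp only [Finset.mem_coe, Finset.mem_range] at hi hj
      by_contra hne'
      rcases lt_trichotomy i j with h | h | h
      · exact (hadjx i j h hj).ne (by rw [hij])
      · exact hne' h
      · exact (hadjx j i h hi).ne (by rw [hij])
    · intro hvm
      obtain ⟨j, hj, hje⟩ := Finset.mem_image.1 hvm
      exact (hadjv j (Finset.mem_range.1 hj)).ne' (by rw [hje])

end FurediAux

section MpGraph

/-- the complete multipartite graph determined by a colouring. -/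
def mpGraph {n : ℕ} (c : Fin n → ℕ) : SimpleGraph (Fin n) where
  Adj u v := c u ≠ c v
  symm := ⟨fun u v h => h.symm⟩
  loopless := ⟨fun u h => h rfl⟩

instance {n : ℕ} (c : Fin n → ℕ) : DecidableRel (mpGraph c).Adj :=
  fun u v => inferInstanceAs (Decidable (c u ≠ c v))

lemma mpGraph_adj {n : ℕ} (c : Fin n → ℕ) (u v : Fin n) :
    (mpGraph c).Adj u v ↔ c u ≠ c v := Iff.rfl

lemma mpGraph_cliqueFree {n r : ℕ} (c : Fin n → ℕ) (hc : ∀ u, c u < r) :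
    (mpGraph c).CliqueFree (r + 1) := by
  intro s hs
  have hinj : Set.InjOn c s := by
    intro a ha b hb hab
    by_contra hne
    exact hs.1 ha hb hne hab
  have h1 : (s.image c).card = r + 1 := by
    rw [Finset.card_image_of_injOn hinj, hs.2]
  have h2 : s.image c ⊆ Finset.range r := by
    intro k hk
    obtain ⟨u, _, rfl⟩ := Finset.mem_image.1 hk
    exact Finset.mem_range.2 (hc u)
  have := Finset.card_le_card h2
  rw [h1, Finset.card_range] at this
  omega

lemma exSup_bddAbove (n k : ℕ) :
    BddAbove {m | ∃ G : SimpleGraph (Fin n), G.CliqueFree k ∧ G.edgeSet.ncard = m} := by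
  refine ⟨Fintype.card (Sym2 (Fin n)), ?_⟩
  rintro m ⟨G, -, rfl⟩
  have h : G.edgeSet.ncard ≤ (Set.univ : Set (Sym2 (Fin n))).ncard :=
    Set.ncard_le_ncard (Set.subset_univ _) Set.finite_univ
  simpa [Set.ncard_univ, Nat.card_eq_fintype_card] using h

end MpGraph

/-- Füredi's partition lemma. -/
theorem stmt2 (t r n : ℕ) (ht : 1 ≤ t) (hr : 2 ≤ r) (hn : 1 ≤ n)
    (G : SimpleGraph (Fin n)) [DecidableRel G.Adj]
    (hfree : G.CliqueFree (r + 1))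
    (hedges : exSup n (r + 1) ≤ G.edgeSet.ncard + t) :
    ∃ V : Fin r → Finset (Fin n),
      (∀ i j, i ≠ j → Disjoint (V i) (V j)) ∧
      (Finset.univ.biUnion V = Finset.univ) ∧
      (∑ i, eIn G (V i : Set (Fin n))) ≤ t ∧
      G.maxDegree = ∑ i ∈ Finset.univ.erase ⟨0, by omega⟩, (V i).card ∧
      (∑ i, ∑ j, if i < j then
          (V i).card * (V j).card - eBtw G (V i : Set (Fin n)) (V j : Set (Fin n))
        else 0) ≤ 2 * t := by
  classical
  haveI : Nonempty (Fin n) := ⟨⟨0, hn⟩⟩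
  -- the chain and its parts
  let D : ℕ → Finset (Fin n) := chainD G
  have hD0 : D 0 = univ := rfl
  have hsub : ∀ k, D (k + 1) ⊆ D k := fun k => chainD_succ_subset G k
  have hDr : D r = ∅ := chainD_empty G r hfree
  have hdisj : ∀ k j, k ≠ j → Disjoint (D k \ D (k + 1)) (D j \ D (j + 1)) := by
    have key : ∀ k j, k < j → Disjoint (D k \ D (k + 1)) (D j \ D (j + 1)) := by
      intro k j hkj
      refine Finset.disjoint_left.2 fun u hu hu' => ?_
      exact (Finset.mem_sdiff.1 hu).2
        (chainD_anti G (by omega) (Finset.mem_sdiff.1 hu').1)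
    intro k j hkj
    rcases Ne.lt_or_gt hkj with h | h
    · exact key k j h
    · exact (key j k h).symm
  -- the colouring
  have hex : ∀ u : Fin n, ∃ k, u ∉ D (k + 1) := fun u =>
    ⟨r - 1, by rw [show r - 1 + 1 = r from by omega, hDr]; exact Finset.notMem_empty u⟩
  let c : Fin n → ℕ := fun u => Nat.find (hex u)
  have hclt : ∀ u, c u < r := by
    intro u
    have h : Nat.find (hex u) ≤ r - 1 := Nat.find_le (show u ∉ D (r - 1 + 1) from by
      rw [show r - 1 + 1 = r from by omega, hDr]; exact Finset.notMem_empty u)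
    show Nat.find (hex u) < r
    omega
  have hcmem : ∀ u, u ∈ D (c u) \ D (c u + 1) := by
    intro u
    have h1 : u ∉ D (c u + 1) := Nat.find_spec (hex u)
    have h2 : u ∈ D (c u) := by
      rcases Nat.eq_zero_or_pos (c u) with h | h
      · rw [h, hD0]; exact Finset.mem_univ u
      · have hm : c u - 1 < c u := by omega
        have h3 := Nat.find_min (hex u) hm
        rw [not_not] at h3
        rwa [show c u - 1 + 1 = c u from by omega] at h3
    exact Finset.mem_sdiff.2 ⟨h2, h1⟩
  have hcuniq : ∀ u k, u ∈ D k \ D (k + 1) → c u = k := by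
    intro u k hk
    by_contra hne
    exact Finset.disjoint_left.1 (hdisj _ _ hne) (hcmem u) hk
  -- generic chain decompositions
  have L2 : ∀ (G' : SimpleGraph (Fin n)) (inst : DecidableRel G'.Adj)
      (A : Finset (Fin n)) (j : ℕ), j ≤ r →
      pcount G' A (D j) = ∑ k ∈ Ico j r, pcount G' A (D k \ D (k + 1)) := by
    intro G' inst A j hj
    have h := pcount_chain G' D hsub A (r - j) j
      (by rw [show j + (r - j) = r from by omega]; exact hDr)
    rwa [show j + (r - j) = r from by omega] at h
  have L1 : ∀ j : ℕ, j ≤ r → (D j).card = ∑ k ∈ Ico j r, (D k \ D (k + 1)).card := by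
    intro j hj
    have h := card_chain D hsub (r - j) j
      (by rw [show j + (r - j) = r from by omega]; exact hDr)
    rwa [show j + (r - j) = r from by omega] at h
  -- the three scalar quantities
  set Sin : ℕ := ∑ k ∈ range r,
    eIn G ((D k \ D (k + 1) : Finset (Fin n)) : Set (Fin n)) with hSin
  set Scr : ℕ := ∑ k ∈ range r, ∑ j ∈ Ico (k + 1) r,
    pcount G (D k \ D (k + 1)) (D j \ D (j + 1)) with hScr
  set M : ℕ := ∑ k ∈ range r, ∑ j ∈ Ico (k + 1) r,
    (D k \ D (k + 1)).card * (D j \ D (j + 1)).card with hM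
  -- the key inequality : 2 * Sin + Scr ≤ M
  have star : 2 * Sin + Scr ≤ M := by
    have hle : ∀ k ∈ range r,
        pcount G (D k \ D (k + 1)) (D k)
          ≤ (D k \ D (k + 1)).card * (D (k + 1)).card := by
      intro k _
      rw [pcount_eq_sum]
      calc ∑ u ∈ D k \ D (k + 1), ((D k).filter fun v => G.Adj u v).card
          ≤ ∑ _u ∈ D k \ D (k + 1), (D (k + 1)).card := by
            refine Finset.sum_le_sum fun u hu => ?_
            have hu' : u ∈ D k := (Finset.mem_sdiff.1 hu).1
            have heq : (D k).filter (fun v => G.Adj u v) = D k ∩ G.neighborFinset u := by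
              ext w; simp [SimpleGraph.mem_neighborFinset]
            rw [heq]
            exact chainD_card_bound G hu'
        _ = (D k \ D (k + 1)).card * (D (k + 1)).card := by
            rw [Finset.sum_const, smul_eq_mul]
    have hdecomp : ∀ k ∈ range r,
        pcount G (D k \ D (k + 1)) (D k)
          = pcount G (D k \ D (k + 1)) (D k \ D (k + 1))
            + ∑ j ∈ Ico (k + 1) r, pcount G (D k \ D (k + 1)) (D j \ D (j + 1)) := by
      intro k hk
      have h := L2 G ‹_› (D k \ D (k + 1)) k (le_of_lt (Finset.mem_range.1 hk))
      rw [h, Finset.sum_eq_sum_Ico_succ_bot (Finset.mem_range.1 hk)]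
    have hprod : ∀ k ∈ range r,
        (D k \ D (k + 1)).card * (D (k + 1)).card
          = ∑ j ∈ Ico (k + 1) r, (D k \ D (k + 1)).card * (D j \ D (j + 1)).card := by
      intro k hk
      rw [L1 (k + 1) (Finset.mem_range.1 hk), Finset.mul_sum]
    have h1 : ∑ k ∈ range r, (pcount G (D k \ D (k + 1)) (D k \ D (k + 1))
            + ∑ j ∈ Ico (k + 1) r, pcount G (D k \ D (k + 1)) (D j \ D (j + 1))) ≤ M := by
      rw [← Finset.sum_congr rfl hdecomp]
      rw [hM, ← Finset.sum_congr rfl hprod]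
      exact Finset.sum_le_sum hle
    rw [Finset.sum_add_distrib] at h1
    have h2 : ∑ k ∈ range r, pcount G (D k \ D (k + 1)) (D k \ D (k + 1)) = 2 * Sin := by
      rw [hSin, Finset.mul_sum]
      exact Finset.sum_congr rfl fun k _ => (eIn_two_mul G (D k \ D (k + 1))).symm
    omega
  -- edge count of G
  have hEdec : ∀ (G' : SimpleGraph (Fin n)) (inst : DecidableRel G'.Adj),
      2 * (@SimpleGraph.edgeFinset (Fin n) G' (SimpleGraph.fintypeEdgeSet G')).card
        = ∑ k ∈ range r, ∑ j ∈ range r,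
            pcount G' (D k \ D (k + 1)) (D j \ D (j + 1)) := by
    intro G' inst
    rw [← SimpleGraph.sum_degrees_eq_twice_card_edges, ← pcount_univ_univ, ← hD0,
      L2 G' inst _ 0 (by omega), range_eq_Ico]
    refine Finset.sum_congr rfl fun k _ => ?_
    rw [pcount_comm, L2 G' inst _ 0 (by omega)]
  -- diagonal sum for G
  have hdiag2 : ∑ k ∈ range r, pcount G (D k \ D (k + 1)) (D k \ D (k + 1)) = 2 * Sin := by
    rw [hSin, Finset.mul_sum]
    exact Finset.sum_congr rfl fun k _ => (eIn_two_mul G (D k \ D (k + 1))).symm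
  -- edge count of G in terms of Sin, Scr
  have hGe : G.edgeSet.ncard = Sin + Scr := by
    have h1 := hEdec G ‹_›
    have hsq : ∑ k ∈ range r, ∑ j ∈ range r, pcount G (D k \ D (k + 1)) (D j \ D (j + 1))
        = (∑ k ∈ range r, pcount G (D k \ D (k + 1)) (D k \ D (k + 1)))
          + 2 * ∑ k ∈ range r, ∑ j ∈ Ico (k + 1) r,
              pcount G (D k \ D (k + 1)) (D j \ D (j + 1)) :=
      square_split r (fun k j => pcount G (D k \ D (k + 1)) (D j \ D (j + 1)))
        (fun k j => pcount_comm G _ _)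
    have h4 : G.edgeSet.ncard = G.edgeFinset.card := by
      rw [← SimpleGraph.coe_edgeFinset, Set.ncard_coe_finset]
    omega
  -- the complete multipartite graph
  have hHadjmem : ∀ k j, k ≠ j → ∀ u ∈ D k \ D (k + 1), ∀ v ∈ D j \ D (j + 1),
      (mpGraph c).Adj u v := by
    intro k j hkj u hu v hv
    show c u ≠ c v
    rw [hcuniq u k hu, hcuniq v j hv]; exact hkj
  have hHcnt : ∀ k j, k ≠ j → pcount (mpGraph c) (D k \ D (k + 1)) (D j \ D (j + 1))
      = #(D k \ D (k + 1)) * #(D j \ D (j + 1)) := by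
    intro k j hkj
    rw [pcount, Finset.filter_true_of_mem, Finset.card_product]
    rintro ⟨u, v⟩ hq
    rw [Finset.mem_product] at hq
    exact hHadjmem k j hkj u hq.1 v hq.2
  have hHdiag : ∀ k, pcount (mpGraph c) (D k \ D (k + 1)) (D k \ D (k + 1)) = 0 := by
    intro k
    rw [pcount, Finset.card_eq_zero, Finset.filter_eq_empty_iff]
    rintro ⟨u, v⟩ hq hadj
    rw [Finset.mem_product] at hq
    exact hadj (by rw [hcuniq u k hq.1, hcuniq v k hq.2])
  have hHedge : (mpGraph c).edgeSet.ncard = M := by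
    have h1 := hEdec (mpGraph c) inferInstance
    have hsqH : ∑ k ∈ range r, ∑ j ∈ range r,
          pcount (mpGraph c) (D k \ D (k + 1)) (D j \ D (j + 1))
        = (∑ k ∈ range r, pcount (mpGraph c) (D k \ D (k + 1)) (D k \ D (k + 1)))
          + 2 * ∑ k ∈ range r, ∑ j ∈ Ico (k + 1) r,
              pcount (mpGraph c) (D k \ D (k + 1)) (D j \ D (j + 1)) :=
      square_split r (fun k j => pcount (mpGraph c) (D k \ D (k + 1)) (D j \ D (j + 1)))
        (fun k j => pcount_comm (mpGraph c) _ _)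
    have hdiagH : ∑ k ∈ range r,
        pcount (mpGraph c) (D k \ D (k + 1)) (D k \ D (k + 1)) = 0 :=
      Finset.sum_eq_zero fun k _ => hHdiag k
    have hoffH : ∑ k ∈ range r, ∑ j ∈ Ico (k + 1) r,
        pcount (mpGraph c) (D k \ D (k + 1)) (D j \ D (j + 1)) = M := by
      rw [hM]
      refine Finset.sum_congr rfl fun k hk => Finset.sum_congr rfl fun j hj => ?_
      exact hHcnt k j (by have := Finset.mem_Ico.1 hj; omega)
    have h4 : (mpGraph c).edgeSet.ncard = (mpGraph c).edgeFinset.card := by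
      rw [← SimpleGraph.coe_edgeFinset, Set.ncard_coe_finset]
    omega
  have hMle : M ≤ exSup n (r + 1) := by
    have hfreeH : (mpGraph c).CliqueFree (r + 1) := mpGraph_cliqueFree c hclt
    exact le_csSup (exSup_bddAbove n (r + 1)) ⟨mpGraph c, hfreeH, hHedge⟩
  have hSint : Sin ≤ t := by omega
  -- conclusion
  refine ⟨fun i => D i.val \ D (i.val + 1), ?_, ?_, ?_, ?_, ?_⟩
  · intro i j hij
    exact hdisj _ _ fun h => hij (Fin.val_injective h)
  · refine Finset.ext fun u => ⟨fun _ => Finset.mem_univ u, fun _ => ?_⟩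
    exact Finset.mem_biUnion.2 ⟨⟨c u, hclt u⟩, Finset.mem_univ _, hcmem u⟩
  · rw [Fin.sum_univ_eq_sum_range
      (fun k => eIn G ((D k \ D (k + 1) : Finset (Fin n)) : Set (Fin n))) r, ← hSin]
    exact hSint
  · -- maxDegree
    have hx1 := stepv_spec G (Finset.univ_nonempty (α := Fin n))
    have hD1 : D 1 = G.neighborFinset (stepv G univ) := by
      show D 0 ∩ G.neighborFinset (stepv G (D 0)) = _
      rw [hD0, Finset.univ_inter]
    have hmax : G.maxDegree = #(D 1) := by
      apply le_antisymm
      · apply SimpleGraph.maxDegree_le_of_forall_degree_le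
        intro v
        have h := hx1.2 v (Finset.mem_univ v)
        rw [hD1]
        calc G.degree v = #(univ ∩ G.neighborFinset v) := by rw [Finset.univ_inter]; rfl
          _ ≤ #(univ ∩ G.neighborFinset (stepv G univ)) := h
          _ = #(G.neighborFinset (stepv G univ)) := by rw [Finset.univ_inter]
      · rw [hD1]
        exact G.degree_le_maxDegree _
    have hung : ∑ i : Fin r, #(D (i : ℕ) \ D ((i : ℕ) + 1)) = #(D 0) := by
      rw [Fin.sum_univ_eq_sum_range (fun k => #(D k \ D (k + 1))) r, range_eq_Ico,
        ← L1 0 (by omega)]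
    have herase := Finset.sum_erase_add Finset.univ
      (fun i : Fin r => #(D (i : ℕ) \ D ((i : ℕ) + 1)))
      (Finset.mem_univ (⟨0, by omega⟩ : Fin r))
    have hv0 : #(D ((⟨0, by omega⟩ : Fin r) : ℕ) \ D (((⟨0, by omega⟩ : Fin r) : ℕ) + 1))
        = #(D 0 \ D 1) := rfl
    have hsplit0 : #(D 0 \ D 1) + #(D 1) = #(D 0) :=
      Finset.card_sdiff_add_card_eq_card (hsub 0)
    rw [hmax]
    beta_reduce at herase ⊢
    rw [hv0] at herase
    omega
  · -- missing cross pairs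
    have hconv : (∑ i : Fin r, ∑ j : Fin r, if i < j then
          #(D (i : ℕ) \ D ((i : ℕ) + 1)) * #(D (j : ℕ) \ D ((j : ℕ) + 1))
            - eBtw G ((D (i : ℕ) \ D ((i : ℕ) + 1) : Finset (Fin n)) : Set (Fin n))
                ((D (j : ℕ) \ D ((j : ℕ) + 1) : Finset (Fin n)) : Set (Fin n))
          else 0)
        = ∑ k ∈ range r, ∑ j ∈ Ico (k + 1) r,
            (#(D k \ D (k + 1)) * #(D j \ D (j + 1))
              - pcount G (D k \ D (k + 1)) (D j \ D (j + 1))) := by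
      simp only [Fin.lt_def]
      rw [Fin.sum_univ_eq_sum_range (fun k => ∑ j : Fin r, if k < (j : ℕ) then
          #(D k \ D (k + 1)) * #(D (j : ℕ) \ D ((j : ℕ) + 1))
            - eBtw G ((D k \ D (k + 1) : Finset (Fin n)) : Set (Fin n))
                ((D (j : ℕ) \ D ((j : ℕ) + 1) : Finset (Fin n)) : Set (Fin n))
          else 0) r]
      refine Finset.sum_congr rfl fun k _ => ?_
      rw [Fin.sum_univ_eq_sum_range (fun j => if k < j then
          #(D k \ D (k + 1)) * #(D j \ D (j + 1))
            - eBtw G ((D k \ D (k + 1) : Finset (Fin n)) : Set (Fin n))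
                ((D j \ D (j + 1) : Finset (Fin n)) : Set (Fin n))
          else 0) r, ← Finset.sum_filter, range_filter_lt]
      refine Finset.sum_congr rfl fun j hj => ?_
      rw [eBtw_eq_pcount G _ _ (hdisj k j (by have := Finset.mem_Ico.1 hj; omega))]
    rw [hconv]
    have hsum : (∑ k ∈ range r, ∑ j ∈ Ico (k + 1) r,
          (#(D k \ D (k + 1)) * #(D j \ D (j + 1))
            - pcount G (D k \ D (k + 1)) (D j \ D (j + 1)))) + Scr = M := by
      rw [hScr, hM, ← Finset.sum_add_distrib]
      refine Finset.sum_congr rfl fun k _ => ?_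
      rw [← Finset.sum_add_distrib]
      refine Finset.sum_congr rfl fun j _ => ?_
      exact Nat.sub_add_cancel (pcount_le G _ _)
    omega
end

section
/- Let G be a K_{r+1}-free graph, let X_1, ..., X_r be disjoint vertex subsets, and let u be a vertex. Then min over pairs i ≠ j of |N(u) ∩ X_i|·|N(u) ∩ X_j| is at most the total number of non-edges between distinct parts X_1, ..., X_r, i.e., at most Σ_{1≤i<j≤r} (|X_i||X_j| - e(X_i,X_j)), provided additionally that each X_i is an independent set. -/
open Finset

lemma eBtw_eq {α : Type*} [DecidableEq α] (G : SimpleGraph α) [DecidableRel G.Adj]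
    (A B : Finset α) (h : Disjoint A B) :
    eBtw G (A : Set α) (B : Set α) = ((A ×ˢ B).filter (fun p => G.Adj p.1 p.2)).card := by
  have hset : {e ∈ G.edgeSet | ∃ u ∈ (A : Set α), ∃ v ∈ (B : Set α), e = s(u, v)}
      = ((((A ×ˢ B).filter (fun p => G.Adj p.1 p.2)).image
          (fun p => s(p.1, p.2)) : Finset (Sym2 α)) : Set (Sym2 α)) := by
    ext e
    simp only [Set.mem_setOf_eq, Finset.coe_image, Set.mem_image, Finset.mem_coe,
      Finset.mem_filter, Finset.mem_product]
    constructor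
    · rintro ⟨he, a, ha, b, hb, rfl⟩
      exact ⟨(a, b), ⟨⟨ha, hb⟩, G.mem_edgeSet.mp he⟩, rfl⟩
    · rintro ⟨⟨a, b⟩, ⟨⟨ha, hb⟩, hadj⟩, rfl⟩
      exact ⟨G.mem_edgeSet.mpr hadj, a, ha, b, hb, rfl⟩
  rw [eBtw, hset, Set.ncard_coe_finset]
  apply Finset.card_image_of_injOn
  rintro ⟨a, b⟩ hab ⟨c, d⟩ hcd heq
  simp only [Finset.mem_coe, Finset.mem_filter, Finset.mem_product] at hab hcd
  rw [Sym2.eq_iff] at heq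
  rcases heq with ⟨rfl, rfl⟩ | ⟨rfl, rfl⟩
  · rfl
  · exact absurd hab.1.1 (Finset.disjoint_right.mp h hcd.1.2)

lemma badF_card {α : Type*} [DecidableEq α] (G : SimpleGraph α) [DecidableRel G.Adj]
    {r : ℕ} (Y : Fin r → Finset α) (i j : Fin r) (hij : i ≠ j) :
    ((Fintype.piFinset Y).filter (fun f => ¬ G.Adj (f i) (f j))).card ≤
      ((Y i ×ˢ Y j).filter (fun p => ¬ G.Adj p.1 p.2)).card *
        ∏ k ∈ (univ.erase j).erase i, (Y k).card := by
  classical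
  set BP := (Y i ×ˢ Y j).filter (fun p => ¬ G.Adj p.1 p.2) with hBP
  have hsub : ((Fintype.piFinset Y).filter (fun f => ¬ G.Adj (f i) (f j))) ⊆
      BP.biUnion (fun p => (Fintype.piFinset Y).filter (fun f => f i = p.1 ∧ f j = p.2)) := by
    intro f hf
    rw [mem_filter] at hf
    rw [Finset.mem_biUnion]
    refine ⟨(f i, f j), ?_, ?_⟩
    · rw [hBP, mem_filter, mem_product]
      exact ⟨⟨Fintype.mem_piFinset.mp hf.1 i, Fintype.mem_piFinset.mp hf.1 j⟩, hf.2⟩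
    · rw [mem_filter]
      exact ⟨hf.1, rfl, rfl⟩
  have fib : ∀ p ∈ BP,
      ((Fintype.piFinset Y).filter (fun f => f i = p.1 ∧ f j = p.2)).card ≤
        ∏ k ∈ (univ.erase j).erase i, (Y k).card := by
    intro p _
    have hsub2 : ((Fintype.piFinset Y).filter (fun f => f i = p.1 ∧ f j = p.2)) ⊆
        Fintype.piFinset (Function.update (Function.update Y i {p.1}) j {p.2}) := by
      intro f hf
      rw [mem_filter, Fintype.mem_piFinset] at hf
      rw [Fintype.mem_piFinset]
      intro k
      by_cases hkj : k = j
      · subst hkj; simp [hf.2.2]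
      · rw [Function.update_of_ne hkj]
        by_cases hki : k = i
        · subst hki; simp [hf.2.1]
        · rw [Function.update_of_ne hki]; exact hf.1 k
    refine le_trans (Finset.card_le_card hsub2) (le_of_eq ?_)
    rw [Fintype.card_piFinset]
    have h1 : ∀ k, ((Function.update (Function.update Y i {p.1}) j {p.2}) k).card
        = Function.update (Function.update (fun k => (Y k).card) i 1) j 1 k := by
      intro k
      by_cases hkj : k = j
      · subst hkj; simp
      · rw [Function.update_of_ne hkj, Function.update_of_ne hkj]
        by_cases hki : k = i
        · subst hki; simp
        · rw [Function.update_of_ne hki, Function.update_of_ne hki]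
    rw [Finset.prod_congr rfl (fun k _ => h1 k),
      Finset.prod_update_of_mem (Finset.mem_univ j), one_mul,
      Finset.sdiff_singleton_eq_erase,
      Finset.prod_update_of_mem (Finset.mem_erase.mpr ⟨hij, Finset.mem_univ i⟩), one_mul,
      Finset.sdiff_singleton_eq_erase]
  calc ((Fintype.piFinset Y).filter (fun f => ¬ G.Adj (f i) (f j))).card
      ≤ (BP.biUnion (fun p => (Fintype.piFinset Y).filter
          (fun f => f i = p.1 ∧ f j = p.2))).card := Finset.card_le_card hsub
    _ ≤ ∑ p ∈ BP, ((Fintype.piFinset Y).filter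
          (fun f => f i = p.1 ∧ f j = p.2)).card := Finset.card_biUnion_le
    _ ≤ ∑ _p ∈ BP, ∏ k ∈ (univ.erase j).erase i, (Y k).card := Finset.sum_le_sum fib
    _ = BP.card * ∏ k ∈ (univ.erase j).erase i, (Y k).card := by
        rw [Finset.sum_const, smul_eq_mul]

/-- For a vertex `u` of a `K_{r+1}`-free graph and disjoint independent sets
`X_1, …, X_r`, some pair of neighborhoods `N(u) ∩ X_i`, `N(u) ∩ X_j` has
product of sizes at most the number of non-edges between the parts. -/
theorem stmt8 (r n : ℕ) (hr : 2 ≤ r) (G : SimpleGraph (Fin n)) [DecidableRel G.Adj]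
    (hfree : G.CliqueFree (r + 1))
    (X : Fin r → Finset (Fin n))
    (hdisj : ∀ i j, i ≠ j → Disjoint (X i) (X j))
    (hindep : ∀ i, ∀ v ∈ X i, ∀ w ∈ X i, ¬ G.Adj v w)
    (u : Fin n) :
    ∃ i j, i ≠ j ∧
      ((X i).filter (fun v => G.Adj u v)).card *
        ((X j).filter (fun v => G.Adj u v)).card ≤
      ∑ i, ∑ j, if i < j then
          (X i).card * (X j).card - eBtw G (X i : Set (Fin n)) (X j : Set (Fin n))
        else 0 := by
  classical
  by_contra hcon
  push_neg at hcon
  set Y : Fin r → Finset (Fin n) := fun i => (X i).filter (fun v => G.Adj u v) with hY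
  set c : Fin r → ℕ := fun i => (Y i).card with hc
  set S : ℕ := ∑ i, ∑ j, if i < j then
      (X i).card * (X j).card - eBtw G (X i : Set (Fin n)) (X j : Set (Fin n))
    else 0 with hS
  have hcon' : ∀ i j, i ≠ j → S < c i * c j := hcon
  set P : Finset (Fin r × Fin r) := (univ ×ˢ univ).filter (fun p => p.1 < p.2) with hP
  set nonAdjY : Fin r × Fin r → ℕ :=
    fun p => ((Y p.1 ×ˢ Y p.2).filter (fun q => ¬ G.Adj q.1 q.2)).card with hnA
  set N : ℕ := ∑ p ∈ P, nonAdjY p with hN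
  -- N ≤ S
  have hNS : N ≤ S := by
    have h1 : S = ∑ p ∈ (univ ×ˢ univ : Finset (Fin r × Fin r)), if p.1 < p.2 then
        (X p.1).card * (X p.2).card -
          eBtw G (X p.1 : Set (Fin n)) (X p.2 : Set (Fin n)) else 0 := by
      rw [hS, Finset.sum_product]
    rw [h1, ← Finset.sum_filter, ← hP, hN]
    refine Finset.sum_le_sum ?_
    intro p hp
    have hlt : p.1 < p.2 := (Finset.mem_filter.mp hp).2
    have hne : p.1 ≠ p.2 := ne_of_lt hlt
    rw [eBtw_eq G (X p.1) (X p.2) (hdisj _ _ hne)]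
    have htot := Finset.card_filter_add_card_filter_not
      (s := X p.1 ×ˢ X p.2) (p := fun q => G.Adj q.1 q.2)
    rw [Finset.card_product] at htot
    have hmono : nonAdjY p ≤
        ((X p.1 ×ˢ X p.2).filter (fun q => ¬ G.Adj q.1 q.2)).card := by
      simp only [hnA]
      apply Finset.card_le_card
      apply Finset.filter_subset_filter
      exact Finset.product_subset_product (Finset.filter_subset _ _) (Finset.filter_subset _ _)
    have key : nonAdjY p + ((X p.1 ×ˢ X p.2).filter (fun q => G.Adj q.1 q.2)).card ≤
        (X p.1).card * (X p.2).card := by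
      rw [← htot]
      calc nonAdjY p + ((X p.1 ×ˢ X p.2).filter (fun q => G.Adj q.1 q.2)).card
          ≤ ((X p.1 ×ˢ X p.2).filter (fun q => ¬ G.Adj q.1 q.2)).card +
            ((X p.1 ×ˢ X p.2).filter (fun q => G.Adj q.1 q.2)).card :=
            Nat.add_le_add_right hmono _
        _ = _ := Nat.add_comm _ _
    exact Nat.le_sub_of_add_le key
  -- positivity
  have hpos : ∀ i, 0 < c i := by
    intro i
    obtain ⟨j, hj⟩ : ∃ j, j ≠ i := by
      have : Nontrivial (Fin r) := Fin.nontrivial_iff_two_le.mpr hr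
      exact exists_ne i
    have h := hcon' i j (Ne.symm hj)
    by_contra h0
    push_neg at h0
    interval_cases hci : c i
    simp [hci] at h
  set Pt : ℕ := ∏ i, c i with hPt
  have hPtpos : 0 < Pt := Finset.prod_pos fun i _ => hpos i
  -- counting transversals
  set good : Finset (Fin r → Fin n) :=
    (Fintype.piFinset Y).filter (fun f => ∀ i j, i ≠ j → G.Adj (f i) (f j)) with hgood
  set bad : Finset (Fin r → Fin n) :=
    (Fintype.piFinset Y).filter (fun f => ¬ ∀ i j, i ≠ j → G.Adj (f i) (f j)) with hbad
  have hsplit : good.card + bad.card = Pt := by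
    rw [hgood, hbad, Finset.card_filter_add_card_filter_not,
      Fintype.card_piFinset]
  have hbadsub : bad ⊆ P.biUnion
      (fun p => (Fintype.piFinset Y).filter (fun f => ¬ G.Adj (f p.1) (f p.2))) := by
    intro f hf
    rw [hbad, Finset.mem_filter] at hf
    obtain ⟨hf1, hf2⟩ := hf
    push_neg at hf2
    obtain ⟨i, j, hij, hnadj⟩ := hf2
    rw [Finset.mem_biUnion]
    rcases lt_or_gt_of_ne hij with hlt | hgt
    · exact ⟨(i, j), Finset.mem_filter.mpr ⟨Finset.mem_product.mpr ⟨mem_univ _, mem_univ _⟩, hlt⟩,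
        Finset.mem_filter.mpr ⟨hf1, hnadj⟩⟩
    · exact ⟨(j, i), Finset.mem_filter.mpr ⟨Finset.mem_product.mpr ⟨mem_univ _, mem_univ _⟩, hgt⟩,
        Finset.mem_filter.mpr ⟨hf1, fun h => hnadj h.symm⟩⟩
  set Q : Fin r × Fin r → ℕ := fun p => ∏ k ∈ (univ.erase p.2).erase p.1, c k with hQ
  have hbadcard : bad.card ≤ ∑ p ∈ P, nonAdjY p * Q p := by
    refine le_trans (Finset.card_le_card hbadsub) (le_trans Finset.card_biUnion_le ?_)
    refine Finset.sum_le_sum ?_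
    intro p hp
    have hne : p.1 ≠ p.2 := ne_of_lt (Finset.mem_filter.mp hp).2
    exact badF_card G Y p.1 p.2 hne
  have hQmul : ∀ p ∈ P, Q p * (c p.1 * c p.2) = Pt := by
    intro p hp
    have hne : p.1 ≠ p.2 := ne_of_lt (Finset.mem_filter.mp hp).2
    rw [hQ, hPt, ← mul_assoc]
    rw [Finset.prod_erase_mul _ _ (Finset.mem_erase.mpr ⟨hne, Finset.mem_univ _⟩)]
    rw [Finset.prod_erase_mul _ _ (Finset.mem_univ _)]
  -- the key arithmetic
  have hkey : (∑ p ∈ P, nonAdjY p * Q p) * (N + 1) ≤ N * Pt := by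
    rw [Finset.sum_mul, hN, Finset.sum_mul]
    refine Finset.sum_le_sum ?_
    intro p hp
    have hne : p.1 ≠ p.2 := ne_of_lt (Finset.mem_filter.mp hp).2
    have h1 : N + 1 ≤ c p.1 * c p.2 := lt_of_le_of_lt hNS (hcon' _ _ hne)
    calc nonAdjY p * Q p * (N + 1) ≤ nonAdjY p * Q p * (c p.1 * c p.2) :=
          Nat.mul_le_mul_left _ h1
      _ = nonAdjY p * (Q p * (c p.1 * c p.2)) := by ring
      _ = nonAdjY p * Pt := by rw [hQmul p hp]
  have hbadlt : bad.card < Pt := by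
    have h2 : (∑ p ∈ P, nonAdjY p * Q p) * (N + 1) < Pt * (N + 1) := by
      calc (∑ p ∈ P, nonAdjY p * Q p) * (N + 1) ≤ N * Pt := hkey
        _ < (N + 1) * Pt := by
            exact (Nat.mul_lt_mul_right hPtpos).mpr (Nat.lt_succ_self N)
        _ = Pt * (N + 1) := Nat.mul_comm _ _
    exact lt_of_le_of_lt hbadcard (Nat.lt_of_mul_lt_mul_right h2)
  have hgoodpos : 0 < good.card := by omega
  obtain ⟨f, hf⟩ := Finset.card_pos.mp hgoodpos
  rw [hgood, Finset.mem_filter] at hf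
  obtain ⟨hf1, hf2⟩ := hf
  have hfY : ∀ i, f i ∈ Y i := Fintype.mem_piFinset.mp hf1
  have huadj : ∀ i, G.Adj u (f i) := by
    intro i
    have := hfY i
    rw [hY, Finset.mem_filter] at this
    exact this.2
  have hfinj : Function.Injective f := by
    intro i j hij
    by_contra hne
    exact (hf2 i j hne).ne hij
  -- build an (r+1)-clique
  refine hfree (insert u (Finset.univ.image f)) ?_
  constructor
  · intro a ha b hb hab
    simp only [Finset.coe_insert, Set.mem_insert_iff, Finset.coe_image, Set.mem_image,
      Finset.mem_coe, Finset.mem_univ, Finset.coe_univ, Set.image_univ, Set.mem_range] at ha hb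
    rcases ha with rfl | ⟨i, rfl⟩
    · rcases hb with rfl | ⟨j, rfl⟩
      · exact absurd rfl hab
      · exact huadj j
    · rcases hb with rfl | ⟨j, rfl⟩
      · exact (huadj i).symm
      · refine hf2 i j ?_
        rintro rfl
        exact hab rfl
  · rw [Finset.card_insert_of_notMem, Finset.card_image_of_injective _ hfinj,
      Finset.card_univ, Fintype.card_fin]
    rw [Finset.mem_image]
    rintro ⟨i, -, hfi⟩
    exact (huadj i).ne hfi.symm
end

section
/- Let G be a graph on n vertices and let V(G) = V_1 ∪ ... ∪ V_r be a partition. Suppose for each i, the set B_i of vertices v ∈ V_i with at least |V(G)\V_i| - c neighbors outside V_i satisfies |B_i| ≥ m, and suppose the total number of non-edges between distinct parts restricted to B_1 × ... × B_r is less than m² (i.e., Σ_{i<j} (|B_i||B_j| - e(B_i,B_j)) < m²). Then G contains a clique x_1, ..., x_r with x_i ∈ B_i. -/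
lemma eBtw_le_card {α : Type*} [DecidableEq α] (G : SimpleGraph α) [DecidableRel G.Adj]
    (A B : Finset α) :
    eBtw G (A : Set α) (B : Set α) ≤ ((A ×ˢ B).filter (fun p => G.Adj p.1 p.2)).card := by
  have h : {e ∈ G.edgeSet | ∃ u ∈ (A : Set α), ∃ v ∈ (B : Set α), e = s(u, v)}
      = (fun p : α × α => s(p.1, p.2)) ''
        (((A ×ˢ B).filter (fun p => G.Adj p.1 p.2)) : Set (α × α)) := by
    ext e
    simp only [Set.mem_setOf_eq, Set.mem_image, Finset.coe_filter, Finset.mem_product,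
      Finset.mem_coe]
    constructor
    · rintro ⟨he, u, hu, v, hv, rfl⟩
      exact ⟨(u, v), ⟨⟨hu, hv⟩, G.mem_edgeSet.mp he⟩, rfl⟩
    · rintro ⟨⟨u, v⟩, ⟨⟨hu, hv⟩, hadj⟩, rfl⟩
      exact ⟨hadj, u, hu, v, hv, rfl⟩
  rw [eBtw, h]
  calc ((fun p : α × α => s(p.1, p.2)) ''
        (((A ×ˢ B).filter (fun p => G.Adj p.1 p.2)) : Set (α × α))).ncard
      ≤ (((A ×ˢ B).filter (fun p => G.Adj p.1 p.2)) : Set (α × α)).ncard :=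
        Set.ncard_image_le (Set.toFinite _)
    _ = _ := Set.ncard_coe_finset _

/-- If each part `V_i` contains at least `m` "big" vertices (vertices with at
least `|V \ V_i| - c` neighbors outside `V_i`) and fewer than `m²` non-edges
are missing between the sets of big vertices, then `G` has a transversal
clique `x_1 ∈ B_1, …, x_r ∈ B_r`. -/
theorem stmt12 (r n c m : ℕ) (hr : 2 ≤ r)
    (G : SimpleGraph (Fin n)) [DecidableRel G.Adj]
    (V : Fin r → Finset (Fin n))
    (hdisj : ∀ i j, i ≠ j → Disjoint (V i) (V j))
    (hcover : Finset.univ.biUnion V = Finset.univ)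
    (B : Fin r → Finset (Fin n))
    (hB : ∀ i, B i = (V i).filter (fun v =>
      (Finset.univ \ V i).card ≤ ((Finset.univ \ V i).filter (fun w => G.Adj v w)).card + c))
    (hsize : ∀ i, m ≤ (B i).card)
    (hmiss : (∑ i, ∑ j, if i < j then
        (B i).card * (B j).card - eBtw G (B i : Set (Fin n)) (B j : Set (Fin n))
      else 0) < m ^ 2) :
    ∃ x : Fin r → Fin n, (∀ i, x i ∈ B i) ∧
      ∀ i j, i ≠ j → G.Adj (x i) (x j) := by
  classical
  -- m is positive
  have hm : 0 < m := by
    rcases Nat.eq_zero_or_pos m with rfl | h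
    · norm_num at hmiss
    · exact h
  have i0 : Fin r := ⟨0, by omega⟩
  obtain ⟨junk, -⟩ : (B i0).Nonempty := Finset.card_pos.mp (lt_of_lt_of_le hm (hsize i0))
  set P : Finset (Fin r → Fin n) := Fintype.piFinset B with hPdef
  have hPcard : P.card = ∏ k, (B k).card := Fintype.card_piFinset B
  set Bad : Finset (Fin r → Fin n) :=
    P.filter (fun x => ¬ ∀ i j, i ≠ j → G.Adj (x i) (x j)) with hBaddef
  -- the set of ordered pairs i < j
  set pairs : Finset (Fin r × Fin r) :=
    (Finset.univ ×ˢ Finset.univ).filter (fun p => p.1 < p.2) with hpairsdef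
  -- bad transversals with a fixed missing pair position
  have hBadsub : Bad ⊆ pairs.biUnion (fun p => P.filter (fun x => ¬ G.Adj (x p.1) (x p.2))) := by
    intro x hx
    rw [hBaddef, Finset.mem_filter] at hx
    obtain ⟨hxP, hnc⟩ := hx
    push_neg at hnc
    obtain ⟨i, j, hij, hna⟩ := hnc
    rcases lt_or_gt_of_ne hij with hlt | hgt
    · exact Finset.mem_biUnion.mpr ⟨(i, j), by simp [hpairsdef, hlt],
        Finset.mem_filter.mpr ⟨hxP, hna⟩⟩
    · exact Finset.mem_biUnion.mpr ⟨(j, i), by simp [hpairsdef, hgt],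
        Finset.mem_filter.mpr ⟨hxP, fun h => hna h.symm⟩⟩
  -- per-pair bound
  have key : ∀ p ∈ pairs,
      (P.filter (fun x => ¬ G.Adj (x p.1) (x p.2))).card * m ^ 2 ≤
      ((B p.1).card * (B p.2).card -
        eBtw G (B p.1 : Set (Fin n)) (B p.2 : Set (Fin n))) * ∏ k, (B k).card := by
    rintro ⟨i, j⟩ hp
    have hij : i < j := by simpa [hpairsdef] using hp
    set Miss : Finset (Fin n × Fin n) :=
      (B i ×ˢ B j).filter (fun q => ¬ G.Adj q.1 q.2) with hMissdef
    set R : ℕ := ∏ k ∈ (Finset.univ.erase i).erase j, (B k).card with hRdef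
    clear_value Miss R
    -- step A : card of filtered P ≤ Miss.card * R
    have stepA : (P.filter (fun x => ¬ G.Adj (x i) (x j))).card ≤ Miss.card * R := by
      have hinj : ∀ x ∈ P.filter (fun x => ¬ G.Adj (x i) (x j)),
          ((x i, x j), fun k => if k = i ∨ k = j then junk else x k) ∈
            Miss ×ˢ Fintype.piFinset (fun k => if k = i ∨ k = j then {junk} else B k) := by
        intro x hx
        rw [Finset.mem_filter] at hx
        obtain ⟨hxP, hna⟩ := hx
        rw [Finset.mem_product]
        constructor
        · rw [hMissdef, Finset.mem_filter, Finset.mem_product]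
          exact ⟨⟨Fintype.mem_piFinset.mp hxP i, Fintype.mem_piFinset.mp hxP j⟩, hna⟩
        · rw [Fintype.mem_piFinset]
          intro k
          by_cases hk : k = i ∨ k = j
          · simp [hk]
          · simp [hk, Fintype.mem_piFinset.mp hxP k]
      have hQ : (∏ k, (if k = i ∨ k = j then ({junk} : Finset (Fin n)) else B k).card) = R := by
        rw [hRdef]
        rw [(Finset.prod_subset (Finset.subset_univ ((Finset.univ.erase i).erase j))
          (fun k _ hk => by
            have hk' : k = i ∨ k = j := by
              by_contra hcon
              push_neg at hcon
              exact hk (Finset.mem_erase.mpr ⟨hcon.2,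
                Finset.mem_erase.mpr ⟨hcon.1, Finset.mem_univ k⟩⟩)
            simp [hk'])).symm]
        apply Finset.prod_congr rfl
        intro k hk
        simp only [Finset.mem_erase] at hk
        simp [hk.1, hk.2.1]
      have hcard := Finset.card_le_card_of_injOn
        (fun x : Fin r → Fin n => ((x i, x j), fun k => if k = i ∨ k = j then junk else x k))
        hinj ?_
      · refine hcard.trans ?_
        rw [Finset.card_product, Fintype.card_piFinset, hQ]
      · intro x hx y hy hxy
        simp only [Prod.mk.injEq] at hxy
        obtain ⟨⟨h1, h2⟩, h3⟩ := hxy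
        funext k
        by_cases hk : k = i ∨ k = j
        · rcases hk with rfl | rfl
          · exact h1
          · exact h2
        · have := congrFun h3 k
          simpa [hk] using this
    -- step B : Miss.card ≤ missing-edge count
    have stepB : Miss.card ≤ (B i).card * (B j).card -
        eBtw G (B i : Set (Fin n)) (B j : Set (Fin n)) := by
      have hsplit : (((B i ×ˢ B j)).filter (fun q => G.Adj q.1 q.2)).card + Miss.card
          = (B i).card * (B j).card := by
        rw [hMissdef, ← Finset.card_product (B i) (B j)]
        exact Finset.card_filter_add_card_filter_not _
      have he := eBtw_le_card G (B i) (B j)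
      exact Nat.le_sub_of_add_le
        (by rw [← hsplit, Nat.add_comm]; exact Nat.add_le_add_right he _)
    -- step C : R * m^2 ≤ full product times stuff
    have stepC : R * m ^ 2 ≤ ∏ k, (B k).card := by
      have hji : j ∈ Finset.univ.erase i :=
        Finset.mem_erase.mpr ⟨hij.ne', Finset.mem_univ j⟩
      have e1 : ∏ k, (B k).card = (B i).card * ∏ k ∈ Finset.univ.erase i, (B k).card :=
        (Finset.mul_prod_erase Finset.univ _ (Finset.mem_univ i)).symm
      have e2 : ∏ k ∈ Finset.univ.erase i, (B k).card = (B j).card * R := by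
        rw [hRdef]; exact (Finset.mul_prod_erase _ _ hji).symm
      rw [e1, e2]
      have : m ^ 2 ≤ (B i).card * (B j).card := by
        rw [pow_two]
        exact Nat.mul_le_mul (hsize i) (hsize j)
      calc R * m ^ 2 ≤ R * ((B i).card * (B j).card) := Nat.mul_le_mul_left _ this
        _ = (B i).card * ((B j).card * R) := by ring
    calc (P.filter (fun x => ¬ G.Adj (x i) (x j))).card * m ^ 2
        ≤ (Miss.card * R) * m ^ 2 := Nat.mul_le_mul_right _ stepA
      _ = Miss.card * (R * m ^ 2) := by ring
      _ ≤ Miss.card * ∏ k, (B k).card := Nat.mul_le_mul_left _ stepC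
      _ ≤ ((B i).card * (B j).card -
            eBtw G (B i : Set (Fin n)) (B j : Set (Fin n))) * ∏ k, (B k).card :=
          Nat.mul_le_mul_right _ stepB
  -- sum over pairs equals the double sum in hmiss
  have hsum : (∑ p ∈ pairs, ((B p.1).card * (B p.2).card -
        eBtw G (B p.1 : Set (Fin n)) (B p.2 : Set (Fin n))))
      = ∑ i, ∑ j, if i < j then
        (B i).card * (B j).card - eBtw G (B i : Set (Fin n)) (B j : Set (Fin n)) else 0 := by
    rw [hpairsdef, Finset.sum_filter, Finset.sum_product]
  -- conclude : Bad.card < P.card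
  have hlt : Bad.card < P.card := by
    have h1 : Bad.card ≤ ∑ p ∈ pairs, (P.filter (fun x => ¬ G.Adj (x p.1) (x p.2))).card :=
      le_trans (Finset.card_le_card hBadsub) (Finset.card_biUnion_le)
    have h2 : Bad.card * m ^ 2 ≤
        (∑ p ∈ pairs, ((B p.1).card * (B p.2).card -
          eBtw G (B p.1 : Set (Fin n)) (B p.2 : Set (Fin n)))) * ∏ k, (B k).card := by
      calc Bad.card * m ^ 2
          ≤ (∑ p ∈ pairs, (P.filter (fun x => ¬ G.Adj (x p.1) (x p.2))).card) * m ^ 2 :=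
            Nat.mul_le_mul_right _ h1
        _ = ∑ p ∈ pairs, (P.filter (fun x => ¬ G.Adj (x p.1) (x p.2))).card * m ^ 2 :=
            Finset.sum_mul _ _ _
        _ ≤ ∑ p ∈ pairs, ((B p.1).card * (B p.2).card -
              eBtw G (B p.1 : Set (Fin n)) (B p.2 : Set (Fin n))) * ∏ k, (B k).card :=
            Finset.sum_le_sum key
        _ = _ := (Finset.sum_mul _ _ _).symm
    rw [hsum] at h2
    have hprodpos : 0 < ∏ k, (B k).card :=
      Finset.prod_pos fun k _ => lt_of_lt_of_le hm (hsize k)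
    have h3 : Bad.card * m ^ 2 < m ^ 2 * ∏ k, (B k).card :=
      lt_of_le_of_lt h2 (mul_lt_mul_of_pos_right hmiss hprodpos)
    rw [← hPcard, mul_comm (m ^ 2) P.card] at h3
    exact Nat.lt_of_mul_lt_mul_right h3
  have hns : ¬ P ⊆ Bad := fun h => absurd (Finset.card_le_card h) (not_le.mpr hlt)
  obtain ⟨x, hxP, hxB⟩ := Finset.not_subset.mp hns
  refine ⟨x, fun i => Fintype.mem_piFinset.mp hxP i, ?_⟩
  by_contra hcon
  exact hxB (Finset.mem_filter.mpr ⟨hxP, hcon⟩)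
end

section
/- Let G be an n-vertex K_{r+1}-free graph and let x_1, ..., x_r be vertices forming a clique K_r in G. Define X_i to be the common neighborhood of {x_1,...,x_r} \ {x_i}, and X = V(G) \ (X_1 ∪ ... ∪ X_r). Then each X_i is an independent set, the sets X_1, ..., X_r, X are pairwise disjoint (they partition V(G)), and Σ_{i=1}^r deg(x_i) ≤ n(r-1) - |X|. -/
open Finset

/-- Given a clique `x_1, …, x_r` in a `K_{r+1}`-free graph `G` on `n`
vertices, the common neighborhoods `X_i` of `{x_1,…,x_r} \ {x_i}` are
independent, pairwise disjoint, and `∑ deg(x_i) ≤ n(r-1) - |X|` where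
`X` is the set of vertices in no `X_i`. -/
theorem stmt13 (r n : ℕ) (G : SimpleGraph (Fin n)) [DecidableRel G.Adj]
    (hfree : G.CliqueFree (r + 1))
    (x : Fin r → Fin n) (hclique : ∀ i j, i ≠ j → G.Adj (x i) (x j))
    (X' : Fin r → Set (Fin n))
    (hX' : ∀ i, X' i = {v | ∀ j, j ≠ i → G.Adj (x j) v})
    (X : Set (Fin n)) (hX : X = Set.univ \ ⋃ i, X' i) :
    (∀ i, ∀ u ∈ X' i, ∀ v ∈ X' i, ¬ G.Adj u v) ∧
    (∀ i j, i ≠ j → Disjoint (X' i) (X' j)) ∧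
    (∀ i, Disjoint (X' i) X) ∧
    ((⋃ i, X' i) ∪ X = Set.univ) ∧
    (∑ i, G.degree (x i)) + X.ncard ≤ (r - 1) * n := by
  classical
  have hinj : Function.Injective x := by
    intro i j h
    by_contra hne
    exact (hclique i j hne).ne h
  -- no vertex is adjacent to all of the x i
  have hA : ∀ v : Fin n, ¬ ∀ i, G.Adj (x i) v := by
    intro v hv
    apply hfree (insert v (univ.image x))
    constructor
    · intro a ha b hb hab
      simp only [coe_insert, Set.mem_insert_iff, mem_coe, mem_image, mem_univ, true_and] at ha hb
      rcases ha with rfl | ⟨i, rfl⟩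
      · rcases hb with rfl | ⟨j, rfl⟩
        · exact absurd rfl hab
        · exact (hv j).symm
      · rcases hb with rfl | ⟨j, rfl⟩
        · exact hv i
        · exact hclique i j (fun h => hab (by rw [h]))
    · rw [card_insert_of_notMem, card_image_of_injective _ hinj, card_univ, Fintype.card_fin]
      simp only [mem_image, mem_univ, true_and, not_exists]
      intro i hi
      exact (hv i).ne hi
  -- part 1 : independence
  have h1 : ∀ i, ∀ u ∈ X' i, ∀ v ∈ X' i, ¬ G.Adj u v := by
    intro i u hu v hv hadj
    rw [hX'] at hu hv
    have hu : ∀ j, j ≠ i → G.Adj (x j) u := hu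
    have hv : ∀ j, j ≠ i → G.Adj (x j) v := hv
    apply hfree (insert u (insert v ((univ.erase i).image x)))
    constructor
    · intro a ha b hb hab
      simp only [coe_insert, Set.mem_insert_iff, mem_coe, mem_image, mem_erase, mem_univ,
        and_true] at ha hb
      rcases ha with rfl | rfl | ⟨j, hj, rfl⟩
      · rcases hb with rfl | rfl | ⟨k, hk, rfl⟩
        · exact absurd rfl hab
        · exact hadj
        · exact (hu k hk).symm
      · rcases hb with rfl | rfl | ⟨k, hk, rfl⟩
        · exact hadj.symm
        · exact absurd rfl hab
        · exact (hv k hk).symm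
      · rcases hb with rfl | rfl | ⟨k, hk, rfl⟩
        · exact hu j hj
        · exact hv j hj
        · exact hclique j k (fun h => hab (by rw [h]))
    · have hvnot : v ∉ (univ.erase i).image x := by
        simp only [mem_image, mem_erase, mem_univ, and_true, not_exists]
        rintro j ⟨hj, hjv⟩
        exact (hv j hj).ne hjv
      have hunot : u ∉ insert v ((univ.erase i).image x) := by
        simp only [mem_insert, mem_image, mem_erase, mem_univ, and_true, not_or, not_exists]
        refine ⟨hadj.ne, ?_⟩
        rintro j ⟨hj, hju⟩
        exact (hu j hj).ne hju
      rw [card_insert_of_notMem hunot, card_insert_of_notMem hvnot,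
        card_image_of_injective _ hinj, card_erase_of_mem (mem_univ i), card_univ,
        Fintype.card_fin]
      have := i.is_lt
      omega
  -- part 2 : pairwise disjoint
  have h2 : ∀ i j, i ≠ j → Disjoint (X' i) (X' j) := by
    intro i j hij
    rw [Set.disjoint_left]
    intro v hvi hvj
    rw [hX'] at hvi hvj
    have hvi : ∀ k, k ≠ i → G.Adj (x k) v := hvi
    have hvj : ∀ k, k ≠ j → G.Adj (x k) v := hvj
    exact hA v (fun k => by
      rcases eq_or_ne k i with rfl | hk
      · exact hvj k hij
      · exact hvi k hk)
  -- part 3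
  have h3 : ∀ i, Disjoint (X' i) X := by
    intro i
    rw [hX, Set.disjoint_left]
    intro v hv hvX
    exact hvX.2 (Set.mem_iUnion.mpr ⟨i, hv⟩)
  -- part 4
  have h4 : (⋃ i, X' i) ∪ X = Set.univ := by
    rw [hX, Set.union_diff_self, Set.union_univ]
  refine ⟨h1, h2, h3, h4, ?_⟩
  -- part 5 : counting
  set P : Fin n → Prop := fun v => ∀ i, ∃ j, j ≠ i ∧ ¬ G.Adj (x j) v with hP
  have hXeq : X = ↑(univ.filter P) := by
    rw [hX]
    ext v
    simp only [Set.mem_diff, Set.mem_univ, true_and, Set.mem_iUnion, not_exists, coe_filter,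
      Set.mem_setOf_eq, mem_univ, hX', hP]
    constructor
    · intro h i
      have := h i
      push_neg at this
      exact this
    · intro h i hi
      obtain ⟨j, hj, hja⟩ := h i
      exact hja (hi j hj)
  have hcard : X.ncard = (univ.filter P).card := by rw [hXeq, Set.ncard_coe_finset]
  have hdeg : ∑ i, G.degree (x i) = ∑ v, (univ.filter fun i => G.Adj (x i) v).card := by
    have h : ∀ i, G.degree (x i) = ∑ v, if G.Adj (x i) v then 1 else 0 := by
      intro i
      rw [← SimpleGraph.card_neighborFinset_eq_degree, SimpleGraph.neighborFinset_eq_filter,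
        card_filter]
    simp_rw [h, card_filter]
    exact Finset.sum_comm
  rw [hcard, hdeg, card_filter, ← Finset.sum_add_distrib]
  have hbound : ∀ v : Fin n,
      (univ.filter fun i => G.Adj (x i) v).card + (if P v then 1 else 0) ≤ r - 1 := by
    intro v
    have hle : (univ.filter fun i => G.Adj (x i) v).card ≤ r := by
      calc (univ.filter fun i => G.Adj (x i) v).card ≤ (univ : Finset (Fin r)).card :=
            card_filter_le _ _
        _ = r := by rw [card_univ, Fintype.card_fin]
    by_cases hp : P v
    · rw [if_pos hp]
      rcases Nat.eq_zero_or_pos r with rfl | hr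
      · exact absurd (fun i => i.elim0) (hA v)
      · obtain ⟨j, hj, hja⟩ := hp ⟨0, hr⟩
        obtain ⟨k, hk, hka⟩ := hp j
        have hjN : j ∈ univ.filter fun i => ¬ G.Adj (x i) v := by
          simp [hja]
        have hkN : k ∈ univ.filter fun i => ¬ G.Adj (x i) v := by
          simp [hka]
        have h2N : 1 < (univ.filter fun i => ¬ G.Adj (x i) v).card :=
          Finset.one_lt_card.mpr ⟨j, hjN, k, hkN, fun h => hk h.symm⟩
        have hsum : (univ.filter fun i => G.Adj (x i) v).card +
            (univ.filter fun i => ¬ G.Adj (x i) v).card = r := by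
          rw [Finset.card_filter_add_card_filter_not, card_univ, Fintype.card_fin]
        omega
    · rw [if_neg hp, add_zero]
      by_contra h
      have hcr : (univ.filter fun i => G.Adj (x i) v).card = r := by omega
      have huniv : (univ.filter fun i => G.Adj (x i) v) = univ := by
        apply Finset.eq_univ_of_card
        rw [hcr, Fintype.card_fin]
      apply hA v
      intro i
      have hi : i ∈ univ.filter fun i => G.Adj (x i) v := by rw [huniv]; exact mem_univ i
      exact (mem_filter.mp hi).2
  calc ∑ v : Fin n, ((univ.filter fun i => G.Adj (x i) v).card + (if P v then 1 else 0))
      ≤ ∑ _v : Fin n, (r - 1) := Finset.sum_le_sum (fun v _ => hbound v)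
    _ = (r - 1) * n := by rw [Finset.sum_const, card_univ, Fintype.card_fin, smul_eq_mul, mul_comm]
end
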